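/- Let G be a K4-free graph on n vertices with e ≤ n^2/4 edges. Then G can be made bipartite by deleting at most 3n^2/28 edges; that is, e - b(G) ≤ 3n^2/28. -/

import Mathlib

set_option linter.unusedSectionVars false


open Finset

namespace SimpleGraph

variable {V : Type*} [Fintype V] [DecidableEq V] (G : SimpleGraph V) [DecidableRel G.Adj]

/-- The number of edges of `G` crossing the cut `(S, Sᶜ)`. -/
def cutSize (S : Finset V) : ℕ :=
  ((S ×ˢ Sᶜ).filter fun p => G.Adj p.1 p.2).card

/-- `b(G)`: the maximum number of edges in a bipartite subgraph of `G`,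
equivalently the maximum over vertex subsets `S` of the number of edges
between `S` and its complement. -/
def maxCut : ℕ := Finset.univ.sup fun S : Finset V => G.cutSize S

/-- The number of edges of `G` with both endpoints in `S`. -/
def spanEdges (S : Finset V) : ℕ :=
  (G.edgeFinset.filter fun e => e ∈ S.sym2).card

end SimpleGraph

namespace K4Aux

variable {V : Type*} [Fintype V] [DecidableEq V] (G : SimpleGraph V) [DecidableRel G.Adj]

/-- number of neighbors of `u` inside `Y`. -/
def inN (u : V) (Y : Finset V) : ℕ := (Y.filter (G.Adj u)).card

/-- ordered cross pairs from `X` to `Y`. -/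
def cutB (X Y : Finset V) : ℕ := ∑ a ∈ X, inN G a Y

/-- twice the number of edges inside `W` (ordered pairs). -/
def ew (W : Finset V) : ℕ := ∑ a ∈ W, inN G a W

variable {G}

lemma inN_le_card (a : V) (Y : Finset V) : inN G a Y ≤ Y.card := Finset.card_filter_le _ _

lemma inN_insert {u : V} {Y : Finset V} (hu : u ∉ Y) (a : V) :
    inN G a (insert u Y) = inN G a Y + if G.Adj a u then 1 else 0 := by
  unfold inN
  rw [Finset.filter_insert]
  by_cases h : G.Adj a u
  · rw [if_pos h, if_pos h,
      Finset.card_insert_of_notMem (fun hc => hu (Finset.mem_of_mem_filter u hc))]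
  · rw [if_neg h, if_neg h, Nat.add_zero]

lemma inN_sdiff {X Y : Finset V} (hXY : X ⊆ Y) (a : V) :
    inN G a (Y \ X) + inN G a X = inN G a Y := by
  unfold inN
  rw [← Finset.card_union_of_disjoint, ← Finset.filter_union, Finset.sdiff_union_of_subset hXY]
  exact Finset.disjoint_filter_filter (Finset.sdiff_disjoint)

lemma inN_univ (a : V) : inN G a Finset.univ = G.degree a := by
  rw [inN, ← SimpleGraph.neighborFinset_eq_filter, SimpleGraph.degree]

lemma inN_compl (X : Finset V) (a : V) : inN G a Xᶜ + inN G a X = G.degree a := by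
  rw [← inN_univ a, ← inN_sdiff (Finset.subset_univ X) a, Finset.compl_eq_univ_sdiff]

lemma inN_symm_card (u : V) (Y : Finset V) :
    (Y.filter fun a => G.Adj a u).card = inN G u Y := by
  unfold inN
  congr 1
  apply Finset.filter_congr
  intro a _
  simp [SimpleGraph.adj_comm]


lemma cutSize_eq (S : Finset V) : G.cutSize S = cutB G S Sᶜ := by
  unfold SimpleGraph.cutSize cutB inN
  rw [Finset.card_filter, Finset.sum_product]
  congr 1
  ext a
  rw [Finset.card_filter]

lemma le_maxCut (S : Finset V) : G.cutSize S ≤ G.maxCut :=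
  Finset.le_sup (Finset.mem_univ S)

lemma ew_insert {u : V} {W : Finset V} (hu : u ∉ W) :
    ew G (insert u W) = ew G W + 2 * inN G u W := by
  unfold ew
  rw [Finset.sum_insert hu]
  have h1 : inN G u (insert u W) = inN G u W := by
    rw [inN_insert hu u, if_neg (G.irrefl (v := u)), Nat.add_zero]
  have h2 : ∀ a ∈ W, inN G a (insert u W) = inN G a W + if G.Adj a u then 1 else 0 :=
    fun a _ => inN_insert hu a
  rw [h1, Finset.sum_congr rfl h2, Finset.sum_add_distrib, ← Finset.card_filter,
    inN_symm_card]
  ring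

lemma ew_univ : ew G Finset.univ = 2 * G.edgeFinset.card := by
  unfold ew
  rw [← SimpleGraph.sum_degrees_eq_twice_card_edges]
  exact Finset.sum_congr rfl fun a _ => inN_univ a

lemma cutB_insert_left {u : V} {X Y : Finset V} (hu : u ∉ X) :
    cutB G (insert u X) Y = inN G u Y + cutB G X Y := by
  unfold cutB; rw [Finset.sum_insert hu]

lemma cutB_insert_right {u : V} {X Y : Finset V} (hu : u ∉ Y) :
    cutB G X (insert u Y) = cutB G X Y + inN G u X := by
  unfold cutB
  rw [Finset.sum_congr rfl fun a _ => inN_insert hu a, Finset.sum_add_distrib,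
    ← Finset.card_filter, inN_symm_card]


lemma greedy_aux : ∀ (k : ℕ) (W X : Finset V), X ⊆ W → Wᶜ.card = k →
    4 * cutB G X (W \ X) + ew G Finset.univ ≤ 4 * G.maxCut + ew G W := by
  intro k
  induction k with
  | zero =>
    intro W X hXW hk
    have hW : W = Finset.univ := by
      have : Wᶜ = ∅ := Finset.card_eq_zero.mp hk
      simpa [Finset.compl_eq_empty_iff] using this
    subst hW
    have hc : cutB G X (Finset.univ \ X) = G.cutSize X := by
      rw [cutSize_eq, Finset.compl_eq_univ_sdiff]
    rw [hc]
    have := le_maxCut (G := G) X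
    omega
  | succ k ih =>
    intro W X hXW hk
    have hne : Wᶜ.Nonempty := by rw [← Finset.card_pos, hk]; omega
    obtain ⟨u, hu⟩ := hne
    have huW : u ∉ W := Finset.mem_compl.mp hu
    have huX : u ∉ X := fun h => huW (hXW h)
    have huWX : u ∉ W \ X := fun h => huW (Finset.mem_sdiff.mp h).1
    have hk' : (insert u W)ᶜ.card = k := by
      rw [Finset.compl_insert, Finset.card_erase_of_mem hu, hk]; omega
    have h1 := ih (insert u W) X (hXW.trans (Finset.subset_insert u W)) hk'
    have h2 := ih (insert u W) (insert u X) (Finset.insert_subset_insert u hXW) hk'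
    have e1 : insert u W \ X = insert u (W \ X) := Finset.insert_sdiff_of_notMem W huX
    have e2 : insert u W \ insert u X = W \ X := by
      ext a
      simp only [Finset.mem_sdiff, Finset.mem_insert]
      constructor
      · rintro ⟨ha | ha, hb⟩
        · exact absurd (Or.inl ha) hb
        · exact ⟨ha, fun h => hb (Or.inr h)⟩
      · rintro ⟨ha, hb⟩
        exact ⟨Or.inr ha, fun h => h.elim (fun h' => huW (h' ▸ ha)) hb⟩
    rw [e1, cutB_insert_right huWX, ew_insert huW] at h1
    rw [e2, cutB_insert_left huX, ew_insert huW] at h2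
    have hsplit := inN_sdiff (G := G) hXW u
    omega

lemma cut_nbhd (v : V) :
    G.cutSize (G.neighborFinset v) + ew G (G.neighborFinset v)
      = ∑ u ∈ G.neighborFinset v, G.degree u := by
  rw [cutSize_eq]
  unfold cutB ew
  rw [← Finset.sum_add_distrib]
  exact Finset.sum_congr rfl fun a _ => inN_compl _ a

lemma sum_sum_deg :
    ∑ v, ∑ u ∈ G.neighborFinset v, G.degree u = ∑ u, (G.degree u) ^ 2 := by
  simp_rw [SimpleGraph.neighborFinset_eq_filter, Finset.sum_filter]
  rw [Finset.sum_comm]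
  refine Finset.sum_congr rfl fun u _ => ?_
  rw [← Finset.sum_filter, Finset.sum_const, smul_eq_mul, inN_symm_card, inN_univ, sq]

lemma A_ineq :
    ∑ u, (G.degree u) ^ 2
      ≤ Fintype.card V * G.maxCut + ∑ v, ew G (G.neighborFinset v) := by
  rw [← sum_sum_deg]
  have h1 : ∀ v : V, v ∈ Finset.univ → ∑ u ∈ G.neighborFinset v, G.degree u ≤
      G.maxCut + ew G (G.neighborFinset v) := by
    intro v _
    rw [← cut_nbhd v]
    exact Nat.add_le_add_right (le_maxCut _) _
  calc ∑ v, ∑ u ∈ G.neighborFinset v, G.degree u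
      ≤ ∑ v : V, (G.maxCut + ew G (G.neighborFinset v)) := Finset.sum_le_sum h1
    _ = Fintype.card V * G.maxCut + ∑ v, ew G (G.neighborFinset v) := by
        rw [Finset.sum_add_distrib, Finset.sum_const, Finset.card_univ, smul_eq_mul]

lemma no_K4 (hG : G.CliqueFree 4) {v u a b : V} (hu : G.Adj v u) (ha : G.Adj v a)
    (hb : G.Adj v b) (hua : G.Adj u a) (hub : G.Adj u b) (hab : G.Adj a b) : False := by
  apply hG {v, u, a, b}
  constructor
  · intro x hx y hy hxy
    simp only [Finset.coe_insert, Set.mem_insert_iff, Finset.coe_singleton,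
      Set.mem_singleton_iff] at hx hy
    rcases hx with rfl | rfl | rfl | rfl <;> rcases hy with rfl | rfl | rfl | rfl <;>
      first
        | exact absurd rfl hxy
        | assumption
        | exact G.adj_symm hu
        | exact G.adj_symm ha
        | exact G.adj_symm hb
        | exact G.adj_symm hua
        | exact G.adj_symm hub
        | exact G.adj_symm hab
  · have h1 : v ∉ ({u, a, b} : Finset V) := by
      simp [hu.ne, ha.ne, hb.ne]
    have h2 : u ∉ ({a, b} : Finset V) := by
      simp [hua.ne, hub.ne]
    have h3 : a ∉ ({b} : Finset V) := by
      simp [hab.ne]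
    rw [Finset.card_insert_of_notMem h1, Finset.card_insert_of_notMem h2,
      Finset.card_insert_of_notMem h3, Finset.card_singleton]

lemma inN_Au_zero (hG : G.CliqueFree 4) {v u a : V} (hu : G.Adj v u)
    (ha : a ∈ (G.neighborFinset v).filter (G.Adj u)) :
    inN G a ((G.neighborFinset v).filter (G.Adj u)) = 0 := by
  rw [Finset.mem_filter, SimpleGraph.mem_neighborFinset] at ha
  rw [inN, Finset.card_eq_zero, Finset.filter_eq_empty_iff]
  intro w hw haw
  rw [Finset.mem_filter, SimpleGraph.mem_neighborFinset] at hw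
  exact no_K4 hG hu ha.1 hw.1 ha.2 hw.2 haw

lemma B_ineq (hG : G.CliqueFree 4) (v : V) :
    4 * (ew G (G.neighborFinset v)) ^ 2 + (G.degree v) ^ 2 * (2 * G.edgeFinset.card)
      ≤ (G.degree v) ^ 2 * (4 * G.maxCut + ew G (G.neighborFinset v)) := by
  set N := G.neighborFinset v with hN
  by_cases hd : G.degree v = 0
  · have hNe : N = ∅ := Finset.card_eq_zero.mp hd
    simp [hNe, ew, hd]
  · have hdN : N.card = G.degree v := rfl
    have hne : N.Nonempty := by
      rw [← Finset.card_pos, hdN]; omega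
    set c : V → ℕ := fun u => cutB G (N.filter (G.Adj u)) (N \ N.filter (G.Adj u)) with hc
    have hcut : ∀ u ∈ N, c u = ∑ a ∈ N.filter (G.Adj u), inN G a N := by
      intro u huN
      rw [hc]
      refine Finset.sum_congr rfl fun a ha => ?_
      have huv : G.Adj v u := by rwa [hN, SimpleGraph.mem_neighborFinset] at huN
      have h0 := inN_Au_zero hG huv ha
      rw [← hN] at h0
      have h1 := inN_sdiff (G := G) (Finset.filter_subset (G.Adj u) N) a
      omega
    have hswap : ∑ u ∈ N, ∑ a ∈ N.filter (G.Adj u), inN G a N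
        = ∑ a ∈ N, (inN G a N) ^ 2 := by
      simp_rw [Finset.sum_filter]
      rw [Finset.sum_comm]
      refine Finset.sum_congr rfl fun a _ => ?_
      rw [← Finset.sum_filter, Finset.sum_const, smul_eq_mul, inN_symm_card, sq]
    have hpig : ∃ u ∈ N, ∑ a ∈ N, (inN G a N) ^ 2 ≤ G.degree v * c u := by
      apply Finset.exists_le_of_sum_le hne
      have : ∑ u ∈ N, G.degree v * c u = G.degree v * ∑ u ∈ N, c u := by
        rw [Finset.mul_sum]
      rw [this, Finset.sum_congr rfl hcut, hswap, Finset.sum_const, hdN, smul_eq_mul]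
    obtain ⟨u, huN, hpu⟩ := hpig
    have hCS : (ew G N) ^ 2 ≤ G.degree v * ∑ a ∈ N, (inN G a N) ^ 2 := by
      have h := sq_sum_le_card_mul_sum_sq (s := N) (f := fun a => ((inN G a N : ℝ)))
      rw [hdN] at h
      have : ((ew G N : ℝ)) ^ 2 ≤ (G.degree v : ℝ) * ∑ a ∈ N, ((inN G a N : ℝ)) ^ 2 := by
        rw [ew]; push_cast; exact_mod_cast h
      have h2 : ((ew G N : ℝ)) ^ 2 ≤ ((G.degree v * ∑ a ∈ N, (inN G a N) ^ 2 : ℕ) : ℝ) := by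
        push_cast; exact this
      exact_mod_cast h2
    have h1 : (ew G N) ^ 2 ≤ (G.degree v) ^ 2 * c u := by
      calc (ew G N) ^ 2 ≤ G.degree v * ∑ a ∈ N, (inN G a N) ^ 2 := hCS
        _ ≤ G.degree v * (G.degree v * c u) := Nat.mul_le_mul_left _ hpu
        _ = (G.degree v) ^ 2 * c u := by ring
    have hg := greedy_aux (G := G) Nᶜ.card N (N.filter (G.Adj u))
      (Finset.filter_subset _ N) rfl
    rw [ew_univ] at hg
    calc 4 * (ew G N) ^ 2 + (G.degree v) ^ 2 * (2 * G.edgeFinset.card)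
        ≤ 4 * ((G.degree v) ^ 2 * c u) + (G.degree v) ^ 2 * (2 * G.edgeFinset.card) := by
          exact Nat.add_le_add_right (Nat.mul_le_mul_left 4 h1) _
      _ = (G.degree v) ^ 2 * (4 * c u + 2 * G.edgeFinset.card) := by ring
      _ ≤ (G.degree v) ^ 2 * (4 * G.maxCut + ew G N) := Nat.mul_le_mul_left _ hg

end K4Aux

/-- A `K₄`-free graph on `n` vertices with `e ≤ n²/4` edges can be made bipartite by
deleting at most `3n²/28` edges: `e - b(G) ≤ 3n²/28`. -/
theorem K4_free_sparse_max_cut {V : Type*} [Fintype V] [DecidableEq V]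
    (G : SimpleGraph V) [DecidableRel G.Adj] (hG : G.CliqueFree 4)
    (he : (G.edgeFinset.card : ℝ) ≤ (Fintype.card V : ℝ) ^ 2 / 4) :
    (G.edgeFinset.card : ℝ) - G.maxCut ≤ 3 * (Fintype.card V : ℝ) ^ 2 / 28 := by
  classical
  rcases Nat.eq_zero_or_pos (Fintype.card V) with hn0 | hnpos
  · have hm0 : (G.edgeFinset.card : ℝ) ≤ 0 := by rw [hn0] at he; simpa using he
    have h1 : (0:ℝ) ≤ (G.maxCut : ℝ) := Nat.cast_nonneg _
    have h2 : (0:ℝ) ≤ 3 * (Fintype.card V : ℝ) ^ 2 / 28 := by positivity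
    linarith
  · have hF4 : 2 * G.edgeFinset.card ≤ 4 * G.maxCut := by
      have h := K4Aux.greedy_aux (G := G) ((∅ : Finset V)ᶜ.card) ∅ ∅ (subset_refl _) rfl
      rw [K4Aux.ew_univ] at h
      simp only [K4Aux.cutB, K4Aux.ew, Finset.sum_empty] at h
      omega
    have hMR : 2 * (G.edgeFinset.card : ℝ) ≤ 4 * (G.maxCut : ℝ) := by exact_mod_cast hF4
    have hCS : (2 * (G.edgeFinset.card : ℝ)) ^ 2
        ≤ (Fintype.card V : ℝ) * ∑ v, (G.degree v : ℝ) ^ 2 := by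
      have h := sq_sum_le_card_mul_sum_sq (s := (Finset.univ : Finset V))
        (f := fun v => (G.degree v : ℝ))
      rw [Finset.card_univ] at h
      have h2m : ∑ v, (G.degree v : ℝ) = 2 * (G.edgeFinset.card : ℝ) := by
        exact_mod_cast congrArg (Nat.cast (R := ℝ))
          (SimpleGraph.sum_degrees_eq_twice_card_edges G)
      rwa [h2m] at h
    have hA : ∑ v, (G.degree v : ℝ) ^ 2 ≤ (Fintype.card V : ℝ) * (G.maxCut : ℝ)
        + ∑ v, (K4Aux.ew G (G.neighborFinset v) : ℝ) := by
      exact_mod_cast K4Aux.A_ineq (G := G)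
    have hBv : ∀ v : V, 32 * (K4Aux.ew G (G.neighborFinset v) : ℝ)
        ≤ 9 * (G.degree v : ℝ) ^ 2
          + 16 * (4 * (G.maxCut : ℝ) - 2 * (G.edgeFinset.card : ℝ)) := by
      intro v
      have hq : 4 * (K4Aux.ew G (G.neighborFinset v) : ℝ) ^ 2
          + (G.degree v : ℝ) ^ 2 * (2 * (G.edgeFinset.card : ℝ))
          ≤ (G.degree v : ℝ) ^ 2 * (4 * (G.maxCut : ℝ)
              + (K4Aux.ew G (G.neighborFinset v) : ℝ)) := by
        exact_mod_cast K4Aux.B_ineq (G := G) hG v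
      nlinarith [hq, hMR,
        sq_nonneg (3 * (G.degree v : ℝ) ^ 2
          - 16 * (4 * (G.maxCut : ℝ) - 2 * (G.edgeFinset.card : ℝ))),
        (Nat.cast_nonneg (K4Aux.ew G (G.neighborFinset v)) : (0:ℝ) ≤ _),
        sq_nonneg (G.degree v : ℝ)]
    have hTsum : 32 * ∑ v, (K4Aux.ew G (G.neighborFinset v) : ℝ)
        ≤ 9 * ∑ v, (G.degree v : ℝ) ^ 2
          + (Fintype.card V : ℝ)
            * (16 * (4 * (G.maxCut : ℝ) - 2 * (G.edgeFinset.card : ℝ))) := by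
      rw [Finset.mul_sum]
      calc ∑ v, 32 * (K4Aux.ew G (G.neighborFinset v) : ℝ)
          ≤ ∑ v : V, (9 * (G.degree v : ℝ) ^ 2
              + 16 * (4 * (G.maxCut : ℝ) - 2 * (G.edgeFinset.card : ℝ))) :=
            Finset.sum_le_sum fun v _ => hBv v
        _ = ∑ v, 9 * (G.degree v : ℝ) ^ 2 + (Fintype.card V : ℝ)
              * (16 * (4 * (G.maxCut : ℝ) - 2 * (G.edgeFinset.card : ℝ))) := by
            rw [Finset.sum_add_distrib, Finset.sum_const, Finset.card_univ, nsmul_eq_mul]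
        _ = 9 * ∑ v, (G.degree v : ℝ) ^ 2 + (Fintype.card V : ℝ)
              * (16 * (4 * (G.maxCut : ℝ) - 2 * (G.edgeFinset.card : ℝ))) := by
            rw [Finset.mul_sum]
    have h23 : 23 * ∑ v, (G.degree v : ℝ) ^ 2
        ≤ 32 * (Fintype.card V : ℝ) * (G.maxCut : ℝ)
          + 16 * (Fintype.card V : ℝ)
            * (4 * (G.maxCut : ℝ) - 2 * (G.edgeFinset.card : ℝ)) := by
      linarith [hA, hTsum]
    have hnn : (0:ℝ) ≤ (Fintype.card V : ℝ) := Nat.cast_nonneg _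
    have h23n := mul_le_mul_of_nonneg_left h23 hnn
    have hCS23 := mul_le_mul_of_nonneg_left hCS (by norm_num : (0:ℝ) ≤ 23)
    have h96 : 92 * (G.edgeFinset.card : ℝ) ^ 2
        + 32 * (G.edgeFinset.card : ℝ) * (Fintype.card V : ℝ) ^ 2
        ≤ 96 * (Fintype.card V : ℝ) ^ 2 * (G.maxCut : ℝ) := by
      nlinarith [h23n, hCS23]
    have hm0 : (0:ℝ) ≤ (G.edgeFinset.card : ℝ) := Nat.cast_nonneg _
    have h1 : (0:ℝ) ≤ (Fintype.card V : ℝ) ^ 2 / 4 - (G.edgeFinset.card : ℝ) := by linarith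
    have h2 : (0:ℝ) ≤ 2 * (Fintype.card V : ℝ) ^ 2 - (23/8) * (G.edgeFinset.card : ℝ)
        - (23/32) * (Fintype.card V : ℝ) ^ 2 := by nlinarith [h1, sq_nonneg (Fintype.card V : ℝ)]
    have hQ : (0:ℝ) ≤ 92 * (G.edgeFinset.card : ℝ) ^ 2
        - 64 * (G.edgeFinset.card : ℝ) * (Fintype.card V : ℝ) ^ 2
        + (72/7) * (Fintype.card V : ℝ) ^ 4 := by
      nlinarith [mul_nonneg h1 h2]
    have hn2 : (0:ℝ) < (Fintype.card V : ℝ) ^ 2 := by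
      have : (0:ℝ) < (Fintype.card V : ℝ) := by exact_mod_cast hnpos
      positivity
    nlinarith [h96, hQ, hn2]
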